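/- Let R = {R_1, ..., R_m} ⊂ ℝ^n with dim span(R) = p and {R_1, ..., R_p} linearly independent. Suppose the coordinate graph G of R has connected components with vertex sets V_1, ..., V_c. Define P_j to be the set of those R_k ∈ R whose basis expansion R_k = Σ a_i R_i has support contained in the indices of V_j (assigning vectors with empty support arbitrarily, say to P_1). Then every R_k belongs to exactly one P_j, and dim span(P_j) = |V_j| for each j; consequently Σ_j dim span(P_j) = p = dim span(R), so {P_1, ..., P_c} is an independent decomposition. -/
import Mathlib


/-- Partitioning `R` according to the connected components `V₁, ..., V_c` of
its coordinate graph (each vector goes to the part of the component containing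
the support of its basis expansion; vectors with empty support go to `P₁`)
yields an independent decomposition, with `dim span Pⱼ = |Vⱼ|` for each `j` and
`∑ⱼ dim span Pⱼ = p = dim span R`. -/
theorem stmt_19 {n m p c : ℕ} (hpm : p ≤ m) (hc : 0 < c)
    (R : Fin m → (Fin n → ℝ)) (hR0 : ∀ k, R k ≠ 0)
    (hdim : Module.finrank ℝ (Submodule.span ℝ (Set.range R)) = p)
    (hLI : LinearIndependent ℝ (fun i : Fin p => R (Fin.castLE hpm i)))
    (a : Fin m → Fin p → ℝ)
    (ha : ∀ k, R k = ∑ i, a k i • R (Fin.castLE hpm i))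
    (G : SimpleGraph (Fin p))
    (hG : ∀ i j, G.Adj i j ↔
      i ≠ j ∧ ∃ k : Fin m, a k i ≠ 0 ∧ a k j ≠ 0)
    -- `V j` is the vertex set of the `j`-th connected component of `G`
    (V : Fin c → Set (Fin p))
    (hVne : ∀ j, (V j).Nonempty)
    (hVdisj : ∀ j j', j ≠ j' → V j ∩ V j' = ∅)
    (hVcover : (⋃ j, V j) = Set.univ)
    (hVcomp : ∀ j, ∀ i ∈ V j, ∀ i', (i' ∈ V j ↔ G.Reachable i i'))
    -- `P j` consists of the vectors whose support lies in `V j`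
    -- (vectors with empty support are assigned to `P ⟨0, hc⟩`)
    (P : Fin c → Set (Fin n → ℝ))
    (hP : ∀ j, P j = {x | ∃ k : Fin m, R k = x ∧
      (((∀ i, a k i = 0) → j = ⟨0, hc⟩) ∧ (∀ i, a k i ≠ 0 → i ∈ V j))}) :
    (∀ k : Fin m, ∃! j, R k ∈ P j) ∧
    (∀ j, Module.finrank ℝ (Submodule.span ℝ (P j)) = (V j).ncard) ∧
    (∑ j, Module.finrank ℝ (Submodule.span ℝ (P j)) = p) ∧
    p = Module.finrank ℝ (Submodule.span ℝ (Set.range R)) := by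
  classical
  set e : Fin p → (Fin n → ℝ) := fun i => R (Fin.castLE hpm i) with he
  -- uniqueness of coefficients
  have huniq : ∀ b b' : Fin p → ℝ, (∑ i, b i • e i) = (∑ i, b' i • e i) → b = b' := by
    intro b b' hbb
    have h0 : ∑ i, (b i - b' i) • e i = 0 := by
      simp only [sub_smul, Finset.sum_sub_distrib, hbb, sub_self]
    have hall := Fintype.linearIndependent_iff.mp hLI (fun i => b i - b' i) h0
    funext i
    have h : b i - b' i = 0 := hall i
    linarith
  -- every support is nonempty
  have hsupp : ∀ k : Fin m, ∃ i, a k i ≠ 0 := by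
    intro k
    by_contra h
    push_neg at h
    apply hR0 k
    rw [ha k]
    simp [h]
  -- equal vectors have equal coefficients
  have haeq : ∀ k k' : Fin m, R k = R k' → a k = a k' := by
    intro k k' hkk
    exact huniq _ _ (by rw [← ha k, ← ha k', hkk])
  -- support lies in a single component
  have hcompmem : ∀ k : Fin m, ∀ j, ∀ i, a k i ≠ 0 → i ∈ V j → ∀ i', a k i' ≠ 0 → i' ∈ V j := by
    intro k j i hi hiV i' hi'
    by_cases hii : i = i'
    · exact hii ▸ hiV
    · have hadj : G.Adj i i' := (hG i i').mpr ⟨hii, k, hi, hi'⟩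
      exact (hVcomp j i hiV i').mpr hadj.reachable
  -- the component containing the support of k
  have hmemP : ∀ k : Fin m, ∃! j, R k ∈ P j := by
    intro k
    obtain ⟨i₀, hi₀⟩ := hsupp k
    have : i₀ ∈ ⋃ j, V j := by rw [hVcover]; trivial
    obtain ⟨j, hj⟩ := Set.mem_iUnion.mp this
    refine ⟨j, ?_, ?_⟩
    · show R k ∈ P j
      rw [hP]
      exact ⟨k, rfl, fun h => absurd (h i₀) hi₀, hcompmem k j i₀ hi₀ hj⟩
    · intro j' hj'
      rw [hP] at hj'
      obtain ⟨k', hk', -, hsub⟩ := hj'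
      have hak : a k' = a k := haeq k' k hk'
      have hmem : i₀ ∈ V j' := hsub i₀ (by rw [hak]; exact hi₀)
      by_contra hne
      have hdj := hVdisj j' j hne
      rw [Set.eq_empty_iff_forall_notMem] at hdj
      exact hdj i₀ ⟨hmem, hj⟩
  -- span of P j equals span of e '' V j
  have hspan : ∀ j, Submodule.span ℝ (P j) = Submodule.span ℝ (e '' V j) := by
    intro j
    apply le_antisymm
    · rw [Submodule.span_le]
      intro x hx
      rw [hP] at hx
      obtain ⟨k, hk, -, hsub⟩ := hx
      rw [← hk, ha k]
      apply Submodule.sum_mem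
      intro i _
      by_cases hi : a k i = 0
      · simp [hi]
      · exact Submodule.smul_mem _ _ (Submodule.subset_span ⟨i, hsub i hi, rfl⟩)
    · rw [Submodule.span_le]
      rintro x ⟨i, hiV, rfl⟩
      apply Submodule.subset_span
      rw [hP]
      refine ⟨Fin.castLE hpm i, rfl, ?_, ?_⟩
      · intro h
        exfalso
        have hdelta : a (Fin.castLE hpm i) = Pi.single i 1 := by
          apply huniq
          rw [← ha]
          simp [he, Pi.single_apply, ite_smul]
        have := h i
        rw [hdelta] at this
        simp at this
      · intro i' hi'
        have hdelta : a (Fin.castLE hpm i) = Pi.single i 1 := by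
          apply huniq
          rw [← ha]
          simp [he, Pi.single_apply, ite_smul]
        rw [hdelta, Pi.single_apply] at hi'
        by_cases hii : i' = i
        · exact hii ▸ hiV
        · simp [hii] at hi'
  -- dimension of each part
  have hdims : ∀ j, Module.finrank ℝ (Submodule.span ℝ (P j)) = (V j).ncard := by
    intro j
    rw [hspan j]
    haveI : Fintype (V j) := Fintype.ofFinite _
    have hLIj : LinearIndependent ℝ (fun i : V j => e i) :=
      hLI.comp (Subtype.val : V j → Fin p) Subtype.val_injective
    have himg : e '' V j = Set.range (fun i : V j => e i) := (Set.image_eq_range _ _)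
    rw [himg, finrank_span_eq_card hLIj, Set.ncard_eq_toFinset_card']
    simp [Set.toFinset_card]
  refine ⟨hmemP, hdims, ?_, hdim.symm⟩
  -- sum of dimensions
  have hsum : ∑ j, (V j).ncard = p := by
    have : ∀ j, (V j).ncard = ((V j).toFinset).card := by
      intro j
      rw [Set.ncard_eq_toFinset_card']
    simp_rw [this]
    have hdisj : ∀ j ∈ Finset.univ, ∀ j' ∈ Finset.univ, j ≠ j' →
        Disjoint ((V j).toFinset) ((V j').toFinset) := by
      intro j _ j' _ hjj
      rw [Finset.disjoint_left]
      intro i hi hi'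
      rw [Set.mem_toFinset] at hi hi'
      have hdj := hVdisj j j' hjj
      rw [Set.eq_empty_iff_forall_notMem] at hdj
      exact hdj i ⟨hi, hi'⟩
    rw [← Finset.card_biUnion hdisj]
    have : (Finset.univ.biUnion fun j => (V j).toFinset) = Finset.univ := by
      apply Finset.eq_univ_of_forall
      intro i
      have : i ∈ ⋃ j, V j := by rw [hVcover]; trivial
      obtain ⟨j, hj⟩ := Set.mem_iUnion.mp this
      exact Finset.mem_biUnion.mpr ⟨j, Finset.mem_univ j, Set.mem_toFinset.mpr hj⟩
    rw [this, Finset.card_univ, Fintype.card_fin]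
  rw [← hsum]
  exact Finset.sum_congr rfl (fun j _ => hdims j)
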